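/- For every natural number n with n = 3 or n ≥ 5, the conjugation action of the symmetric group Equiv.Perm (Fin n) on the set of transpositions (the conjugacy class of the transposition swapping 0 and 1) is primitive: it is transitive and admits no G-invariant equivalence relation other than equality and the full relation (equivalently, every block is trivial). -/

import Mathlib

open Equiv

/-- Any matching of distinct points to distinct points extends to a permutation. -/
lemma exists_perm_map {α : Type*} [DecidableEq α] (l : List (α × α))
    (h1 : (l.map Prod.fst).Nodup) (h2 : (l.map Prod.snd).Nodup) :
    ∃ g : Equiv.Perm α, ∀ p ∈ l, g p.1 = p.2 := by
  induction l with
  | nil => exact ⟨1, by simp⟩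
  | cons ab l ih =>
    simp only [List.map_cons, List.nodup_cons, List.mem_map] at h1 h2
    obtain ⟨g, hg⟩ := ih h1.2 h2.2
    refine ⟨g * Equiv.swap ab.1 (g⁻¹ ab.2), ?_⟩
    intro p hp
    rcases List.mem_cons.mp hp with rfl | hp
    · simp [Equiv.swap_apply_left]
    · have hp1 : p.1 ≠ ab.1 := fun h => h1.1 ⟨p, hp, h⟩
      have hp2 : p.1 ≠ g⁻¹ ab.2 := by
        intro h
        apply h2.1
        exact ⟨p, hp, by rw [← hg p hp, h]; simp⟩
      simp [Equiv.swap_apply_of_ne_of_ne hp1 (show p.1 ≠ g.symm ab.2 from hp2), hg p hp]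

/-- The conjugation action of a group `G` on a subset `C ⊆ G` (closed under
conjugation) is *primitive*: it is transitive, and every equivalence relation on `C`
that is invariant under conjugation by elements of `G` is either the equality
relation or the full relation. -/
def IsPrimitiveConjAction {G : Type*} [Group G] (C : Set G) : Prop :=
  (∀ x ∈ C, ∀ y ∈ C, ∃ g : G, g * x * g⁻¹ = y) ∧
  ∀ r : G → G → Prop,
    (∀ x ∈ C, r x x) →
    (∀ x ∈ C, ∀ y ∈ C, r x y → r y x) →
    (∀ x ∈ C, ∀ y ∈ C, ∀ z ∈ C, r x y → r y z → r x z) →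
    (∀ g : G, ∀ x ∈ C, ∀ y ∈ C, r x y → r (g * x * g⁻¹) (g * y * g⁻¹)) →
    (∀ x ∈ C, ∀ y ∈ C, (r x y ↔ x = y)) ∨ (∀ x ∈ C, ∀ y ∈ C, r x y)


theorem primitive_transpositions (n : ℕ) (hn : n = 3 ∨ 5 ≤ n) :
    IsPrimitiveConjAction
      {σ : Equiv.Perm (Fin n) |
        IsConj (Equiv.swap (⟨0, by omega⟩ : Fin n) (⟨1, by omega⟩ : Fin n)) σ} := by
  have hn2 : 2 ≤ n := by omega
  set z : Fin n := ⟨0, by omega⟩ with hz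
  set o : Fin n := ⟨1, by omega⟩ with ho
  have hzo : z ≠ o := by simp [hz, ho, Fin.ext_iff]
  set C : Set (Equiv.Perm (Fin n)) := {σ | IsConj (Equiv.swap z o) σ} with hC
  -- membership characterization
  have memC : ∀ x, x ∈ C ↔ ∃ a b : Fin n, a ≠ b ∧ x = Equiv.swap a b := by
    intro x
    constructor
    · intro hx
      obtain ⟨c, hc⟩ := isConj_iff.mp hx
      exact ⟨c z, c o, fun h => hzo (c.injective h), by
        rw [Equiv.swap_apply_apply, hc]⟩
    · rintro ⟨a, b, hab, rfl⟩
      exact Equiv.Perm.isConj_swap hzo hab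
  have memC' : ∀ a b : Fin n, a ≠ b → Equiv.swap a b ∈ C :=
    fun a b hab => (memC _).mpr ⟨a, b, hab, rfl⟩
  constructor
  · intro x hx y hy
    obtain ⟨c, hc⟩ := isConj_iff.mp ((hx.symm.trans hy : IsConj x y))
    exact ⟨c, hc⟩
  · intro r hrefl hsymm htrans hinv
    -- conjugation invariance in swap form
    have hinv' : ∀ (g : Equiv.Perm (Fin n)) (a b c d : Fin n), a ≠ b → c ≠ d →
        r (Equiv.swap a b) (Equiv.swap c d) →
        r (Equiv.swap (g a) (g b)) (Equiv.swap (g c) (g d)) := by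
      intro g a b c d hab hcd h
      have := hinv g _ (memC' a b hab) _ (memC' c d hcd) h
      rwa [← Equiv.swap_apply_apply, ← Equiv.swap_apply_apply] at this
    by_cases heq : ∀ x ∈ C, ∀ y ∈ C, r x y ↔ x = y
    · exact Or.inl heq
    · right
      push_neg at heq
      obtain ⟨x, hx, y, hy, hxy⟩ := heq
      -- extract a related distinct pair
      have hkey : r x y ∧ x ≠ y := by
        rcases hxy with h | ⟨hnr, rfl⟩
        · exact h
        · exact absurd (hrefl x hx) hnr
      obtain ⟨hrxy, hne⟩ := hkey
      obtain ⟨a, b, hab, rfl⟩ := (memC x).mp hx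
      obtain ⟨c, d, hcd, rfl⟩ := (memC y).mp hy
      -- derive a "sharing a point" related pair
      have share : ∃ p q s : Fin n, p ≠ q ∧ p ≠ s ∧ q ≠ s ∧
          r (Equiv.swap p q) (Equiv.swap p s) := by
        by_cases hac : a = c
        · subst hac
          have hbd : b ≠ d := fun h => hne (by rw [h])
          exact ⟨a, b, d, hab, hcd, hbd, hrxy⟩
        by_cases had : a = d
        · subst had
          rw [Equiv.swap_comm c a] at hrxy
          have hbc : b ≠ c := fun h => hne (by rw [h, Equiv.swap_comm])
          exact ⟨a, b, c, hab, Ne.symm hcd, hbc, hrxy⟩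
        by_cases hbc : b = c
        · subst hbc
          rw [Equiv.swap_comm a b] at hrxy
          have had' : a ≠ d := had
          exact ⟨b, a, d, Ne.symm hab, hcd, had', hrxy⟩
        by_cases hbd : b = d
        · subst hbd
          rw [Equiv.swap_comm a b, Equiv.swap_comm c b] at hrxy
          exact ⟨b, a, c, Ne.symm hab, Ne.symm hcd, fun h => hne (by rw [h]), hrxy⟩
        -- disjoint case: a,b,c,d pairwise distinct
        have h4 : 4 ≤ n := by
          have : ({a, b, c, d} : Finset (Fin n)).card ≤ Fintype.card (Fin n) :=
            Finset.card_le_univ _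
          rw [Fintype.card_fin] at this
          have hcard : ({a, b, c, d} : Finset (Fin n)).card = 4 := by
            rw [Finset.card_insert_of_notMem (by simp [hab, hac, had]),
              Finset.card_insert_of_notMem (by simp [hbc, hbd]),
              Finset.card_insert_of_notMem (by simp [hcd]),
              Finset.card_singleton]
          omega
        have h5 : 5 ≤ n := by omega
        obtain ⟨e, he⟩ : ∃ e : Fin n, e ∉ ({a, b, c, d} : Finset (Fin n)) := by
          by_contra h
          push_neg at h
          have : Finset.univ ⊆ ({a, b, c, d} : Finset (Fin n)) := fun x _ => h x
          have := (Finset.card_le_card this)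
          simp only [Finset.card_univ, Fintype.card_fin] at this
          have : ({a, b, c, d} : Finset (Fin n)).card ≤ 4 := by
            apply le_trans (Finset.card_insert_le _ _)
            apply Nat.succ_le_succ
            apply le_trans (Finset.card_insert_le _ _)
            apply Nat.succ_le_succ
            apply le_trans (Finset.card_insert_le _ _)
            simp
          omega
        simp only [Finset.mem_insert, Finset.mem_singleton, not_or] at he
        obtain ⟨hea, heb, hec, hed⟩ := he
        -- g fixes a, c, d and sends b to e
        have hae : a ≠ e := fun h => hea h.symm
        have hbe : b ≠ e := fun h => heb h.symm
        obtain ⟨g, hg⟩ := exists_perm_map [(a, a), (b, e), (c, c), (d, d)]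
          (by simp [hab, hac, had, hbc, hbd, hcd])
          (by simp [hac, had, hcd, hae, hec, hed])
        have hga : g a = a := hg (a, a) (by simp)
        have hgb : g b = e := hg (b, e) (by simp)
        have hgc : g c = c := hg (c, c) (by simp)
        have hgd : g d = d := hg (d, d) (by simp)
        have h2 := hinv' g a b c d hab hcd hrxy
        rw [hga, hgb, hgc, hgd] at h2
        -- r (swap a e) (swap c d); combine with r (swap a b) (swap c d)
        have h3 : r (Equiv.swap c d) (Equiv.swap a e) :=
          hsymm _ (memC' a e hae) _ (memC' c d hcd) h2
        exact ⟨a, b, e, hab, hae, hbe, htrans _ (memC' a b hab) _ (memC' c d hcd) _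
          (memC' a e hae) hrxy h3⟩
      obtain ⟨p, q, s, hpq, hps, hqs, hr0⟩ := share
      -- sharing-point pairs are all related
      have step : ∀ u v w : Fin n, u ≠ v → u ≠ w → v ≠ w →
          r (Equiv.swap u v) (Equiv.swap u w) := by
        intro u v w huv huw hvw
        obtain ⟨g, hg⟩ := exists_perm_map [(p, u), (q, v), (s, w)]
          (by simp [hpq, hps, hqs]) (by simp [huv, huw, hvw])
        have := hinv' g p q p s hpq hps hr0
        rw [hg (p, u) (by simp), hg (q, v) (by simp), hg (s, w) (by simp)] at this
        exact this
      -- now prove fullness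
      intro x hx y hy
      obtain ⟨a, b, hab, rfl⟩ := (memC x).mp hx
      obtain ⟨c, d, hcd, rfl⟩ := (memC y).mp hy
      by_cases hac : a = c
      · subst hac
        by_cases hbd : b = d
        · subst hbd; exact hrefl _ hx
        · exact step a b d hab hcd hbd
      by_cases had : a = d
      · subst had
        rw [Equiv.swap_comm c a]
        by_cases hbc : b = c
        · subst hbc; exact hrefl _ hx
        · exact step a b c hab (Ne.symm hcd) hbc
      by_cases hbc : b = c
      · subst hbc
        rw [Equiv.swap_comm a b]
        exact step b a d (Ne.symm hab) hcd had
      by_cases hbd : b = d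
      · subst hbd
        rw [Equiv.swap_comm a b, Equiv.swap_comm c b]
        exact step b a c (Ne.symm hab) (Ne.symm hcd) hac
      · -- all distinct: chain through swap b c
        have h1 : r (Equiv.swap a b) (Equiv.swap b c) := by
          rw [Equiv.swap_comm a b]; exact step b a c (Ne.symm hab) hbc hac
        have h2 : r (Equiv.swap b c) (Equiv.swap c d) := by
          rw [Equiv.swap_comm b c]; exact step c b d (Ne.symm hbc) hcd hbd
        exact htrans _ (memC' a b hab) _ (memC' b c hbc) _ (memC' c d hcd) h1 h2
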